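/- Let ω > ω_k > 0 and γ² > ω/2 + √(ω_k(ω−ω_k)). Then both ν_±² = (2γ²−ω) ± √((2γ²−ω)² − 4ω_k(ω−ω_k)) are positive reals, and the Hermitian matrix m_k(ν) = ν²I − 2γν(iJ) + 2diag(ω−ω_k, ω_k) satisfies: m_k(0) is positive definite, m_k(ν) has exactly one negative eigenvalue for ν_− < ν < ν_+, and m_k(ν) is positive definite for ν > ν_+. -/

import Mathlib

open Matrix Complex
open scoped ComplexOrder

/-- The 2×2 Fourier block of the filament problem:
`m_k(ν) = ν² I − 2γν (iJ) + 2 diag(ω−ω_k, ω_k)`, with `iJ = !![0,-i; i,0]`. -/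
noncomputable def mkF (ω ωk γ ν : ℝ) : Matrix (Fin 2) (Fin 2) ℂ :=
  !![(ν ^ 2 + 2 * (ω - ωk) : ℝ), 2 * γ * ν * Complex.I;
     -(2 * γ * ν * Complex.I), (ν ^ 2 + 2 * ωk : ℝ)]

/-- `ν_±² = (2γ²−ω) ± √((2γ²−ω)² − 4ω_k(ω−ω_k))`. -/
noncomputable def νsqP (ω ωk γ : ℝ) : ℝ :=
  (2 * γ ^ 2 - ω) + Real.sqrt ((2 * γ ^ 2 - ω) ^ 2 - 4 * ωk * (ω - ωk))

noncomputable def νsqM (ω ωk γ : ℝ) : ℝ :=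
  (2 * γ ^ 2 - ω) - Real.sqrt ((2 * γ ^ 2 - ω) ^ 2 - 4 * ωk * (ω - ωk))

/-- Morse index: the number of negative eigenvalues (with multiplicity) of a
Hermitian matrix (and `0` for non-Hermitian matrices). -/
noncomputable def morseIndex {m : ℕ} (A : Matrix (Fin m) (Fin m) ℂ) : ℕ :=
  if h : A.IsHermitian then (Finset.univ.filter fun i => h.eigenvalues i < 0).card else 0

section Aux

variable {n : Type*} [Fintype n] [DecidableEq n]

lemma herm_trace_eq_sum_eigenvalues {A : Matrix n n ℂ} (hA : A.IsHermitian) :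
    A.trace = ∑ i, (RCLike.ofReal (hA.eigenvalues i) : ℂ) := by
  nth_rewrite 1 [hA.spectral_theorem]
  rw [Unitary.conjStarAlgAut_apply, Matrix.trace_mul_cycle, Unitary.coe_star_mul_self, one_mul, Matrix.trace_diagonal]
  rfl

lemma posDef_of_eigenvalues_pos {A : Matrix n n ℂ} (hA : A.IsHermitian)
    (h : ∀ i, 0 < hA.eigenvalues i) : A.PosDef := by
  exact hA.posDef_iff_eigenvalues_pos.mpr h

end Aux

lemma mkF_isHermitian (ω ωk γ ν : ℝ) : (mkF ω ωk γ ν).IsHermitian := by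
  rw [Matrix.IsHermitian]
  ext i j
  fin_cases i <;> fin_cases j <;>
    simp [mkF, Matrix.conjTranspose_apply, Complex.ext_iff]

lemma mkF_det (ω ωk γ ν : ℝ) :
    (mkF ω ωk γ ν).det =
      (((ν ^ 2 + 2 * (ω - ωk)) * (ν ^ 2 + 2 * ωk) - 4 * γ ^ 2 * ν ^ 2 : ℝ) : ℂ) := by
  simp only [mkF, Matrix.det_fin_two_of]
  push_cast
  ring_nf
  rw [Complex.I_sq]
  ring

lemma mkF_trace (ω ωk γ ν : ℝ) :
    (mkF ω ωk γ ν).trace = ((2 * ν ^ 2 + 2 * ω : ℝ) : ℂ) := by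
  simp only [mkF, Matrix.trace_fin_two_of]
  push_cast
  ring

set_option maxHeartbeats 1000000 in
theorem filament_block_omega_above (ω ωk γ : ℝ) (hωk : ωk > 0) (hω : ω > ωk)
    (hγ : γ ^ 2 > ω / 2 + Real.sqrt (ωk * (ω - ωk))) :
    0 < νsqM ω ωk γ ∧ 0 < νsqP ω ωk γ ∧
    (mkF ω ωk γ 0).PosDef ∧
    (∀ ν : ℝ, Real.sqrt (νsqM ω ωk γ) < ν → ν < Real.sqrt (νsqP ω ωk γ) →
      morseIndex (mkF ω ωk γ ν) = 1) ∧
    (∀ ν : ℝ, Real.sqrt (νsqP ω ωk γ) < ν → (mkF ω ωk γ ν).PosDef) := by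
  set M := νsqM ω ωk γ with hM
  set P := νsqP ω ωk γ with hP
  have hprod0 : 0 < ωk * (ω - ωk) := mul_pos hωk (by linarith)
  have hsq : Real.sqrt (ωk * (ω - ωk)) ^ 2 = ωk * (ω - ωk) := Real.sq_sqrt hprod0.le
  have hsqpos : 0 < Real.sqrt (ωk * (ω - ωk)) := Real.sqrt_pos.2 hprod0
  have hg : 2 * Real.sqrt (ωk * (ω - ωk)) < 2 * γ ^ 2 - ω := by linarith
  have hgpos : 0 < 2 * γ ^ 2 - ω := by linarith
  have hdisc : 0 ≤ (2 * γ ^ 2 - ω) ^ 2 - 4 * ωk * (ω - ωk) := by nlinarith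
  set s := Real.sqrt ((2 * γ ^ 2 - ω) ^ 2 - 4 * ωk * (ω - ωk)) with hs
  have hs2 : s ^ 2 = (2 * γ ^ 2 - ω) ^ 2 - 4 * ωk * (ω - ωk) := Real.sq_sqrt hdisc
  have hsnonneg : 0 ≤ s := Real.sqrt_nonneg _
  have hslt : s < 2 * γ ^ 2 - ω := by nlinarith
  have hMpos : 0 < M := by rw [hM, νsqM]; linarith
  have hPpos : 0 < P := by rw [hP, νsqP]; linarith
  have hMleP : M ≤ P := by rw [hM, hP, νsqM, νsqP]; linarith
  -- determinant factorization
  have hfac : ∀ ν : ℝ,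
      (ν ^ 2 + 2 * (ω - ωk)) * (ν ^ 2 + 2 * ωk) - 4 * γ ^ 2 * ν ^ 2
        = (ν ^ 2 - M) * (ν ^ 2 - P) := by
    intro ν
    rw [hM, hP, νsqM, νsqP, ← hs]
    linear_combination hs2
  -- eigenvalue relations
  have hEig : ∀ ν : ℝ,
      (mkF ω ωk γ ν).IsHermitian ∧
      ∀ h : (mkF ω ωk γ ν).IsHermitian,
        h.eigenvalues 0 * h.eigenvalues 1 = (ν ^ 2 - M) * (ν ^ 2 - P) ∧
        h.eigenvalues 0 + h.eigenvalues 1 = 2 * ν ^ 2 + 2 * ω := by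
    intro ν
    refine ⟨mkF_isHermitian ω ωk γ ν, fun h => ?_⟩
    constructor
    · have h1 := h.det_eq_prod_eigenvalues
      rw [mkF_det, Fin.prod_univ_two, hfac] at h1
      rw [show (((ν ^ 2 - M) * (ν ^ 2 - P) : ℝ) : ℂ)
        = RCLike.ofReal ((ν ^ 2 - M) * (ν ^ 2 - P)) from rfl] at h1
      exact_mod_cast h1.symm
    · have h2 := herm_trace_eq_sum_eigenvalues h
      rw [mkF_trace, Fin.sum_univ_two] at h2
      rw [show ((2 * ν ^ 2 + 2 * ω : ℝ) : ℂ)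
        = RCLike.ofReal (2 * ν ^ 2 + 2 * ω) from rfl] at h2
      exact_mod_cast h2.symm
  -- positive definiteness criterion
  have hPD : ∀ ν : ℝ, 0 < (ν ^ 2 - M) * (ν ^ 2 - P) → (mkF ω ωk γ ν).PosDef := by
    intro ν hd
    obtain ⟨h, hrel⟩ := hEig ν
    obtain ⟨hpr, hsu⟩ := hrel h
    refine posDef_of_eigenvalues_pos h fun i => ?_
    have hωpos : 0 < ω := lt_trans hωk hω
    have h0 : 0 < h.eigenvalues 0 := by nlinarith [sq_nonneg (h.eigenvalues 0 - h.eigenvalues 1)]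
    have h1 : 0 < h.eigenvalues 1 := by nlinarith
    fin_cases i <;> assumption
  refine ⟨hMpos, hPpos, ?_, ?_, ?_⟩
  · exact hPD 0 (by nlinarith)
  · intro ν hν1 hν2
    have hν0 : 0 ≤ ν := le_trans (Real.sqrt_nonneg _) hν1.le
    have hlt1 : M < ν ^ 2 := by
      have := Real.sq_sqrt hMpos.le
      nlinarith [Real.sqrt_nonneg M]
    have hlt2 : ν ^ 2 < P := by
      have := Real.sq_sqrt hPpos.le
      nlinarith [Real.sqrt_nonneg P]
    have hd : (ν ^ 2 - M) * (ν ^ 2 - P) < 0 :=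
      mul_neg_of_pos_of_neg (by linarith) (by linarith)
    obtain ⟨h, hrel⟩ := hEig ν
    obtain ⟨hpr, hsu⟩ := hrel h
    rw [morseIndex, dif_pos h, Finset.card_filter, Fin.sum_univ_two]
    have hd' : h.eigenvalues 0 * h.eigenvalues 1 < 0 := by rw [hpr]; exact hd
    rcases mul_neg_iff.1 hd' with ⟨ha, hb⟩ | ⟨ha, hb⟩
    · rw [if_neg (not_lt.2 ha.le), if_pos hb]
    · rw [if_pos ha, if_neg (not_lt.2 hb.le)]
  · intro ν hν
    have hν0 : 0 ≤ ν := le_trans (Real.sqrt_nonneg _) hν.le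
    have hgt : P < ν ^ 2 := by
      have := Real.sq_sqrt hPpos.le
      nlinarith [Real.sqrt_nonneg P]
    exact hPD ν (mul_pos (by linarith) (by linarith))
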